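/- Fix integers d ≥ 1 and i. Any two distinct translates v + Δ_{d,j} (with v ∈ Z^{d+1}, Σ v_t = i - j, 1 ≤ j ≤ d) intersect in a common face of both; hence this family forms a polyhedral subdivision of the hyperplane Σ x_t = i. -/

import Mathlib

open scoped Classical BigOperators

noncomputable section

/-- Descent set of a permutation of `Fin d`. -/
def descents (d : ℕ) (π : Equiv.Perm (Fin d)) : Finset (Fin d) :=
  Finset.univ.filter (fun t => ∃ h : (t : ℕ) + 1 < d, π ⟨(t : ℕ) + 1, h⟩ < π t)

/-- Eulerian number `A(d,j)`: permutations of `{1,…,d}` with `j-1` descents. -/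
def A (d j : ℕ) : ℕ :=
  (Finset.univ.filter (fun π : Equiv.Perm (Fin d) => (descents d π).card = j - 1)).card

/-- `C s n m`: number of weak compositions of `m` into `n` parts, each part at most `s`. -/
def C (s n : ℕ) (m : ℤ) : ℕ :=
  Fintype.card {v : Fin n → Fin (s + 1) // ∑ t, ((v t : ℕ) : ℤ) = m}

/-- The hypersimplex `Δ_{d,j} ⊆ ℝ^{d+1}`. -/
def Δ (d j : ℕ) : Set (Fin (d + 1) → ℝ) :=
  {x | ∑ t, x t = j ∧ ∀ t, 0 ≤ x t ∧ x t ≤ 1}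

/-- The lattice translate `v + Δ_{d,j}`. -/
def latTranslate (d : ℕ) (v : Fin (d + 1) → ℤ) (j : ℕ) : Set (Fin (d + 1) → ℝ) :=
  {x | (fun t => x t - (v t : ℝ)) ∈ Δ d j}

/-- The 0/1 indicator vector of a subset `T ⊆ [d+1]`. -/
def ind (d : ℕ) (T : Finset (Fin (d + 1))) : Fin (d + 1) → ℝ :=
  fun t => if t ∈ T then 1 else 0

/-- `F` is a face of `P`: empty, or the set of maximizers of a linear functional over `P`. -/
def IsFace {n : ℕ} (P F : Set (Fin n → ℝ)) : Prop :=
  F = ∅ ∨ ∃ f : (Fin n → ℝ) →ₗ[ℝ] ℝ, F = {x | x ∈ P ∧ ∀ y ∈ P, f y ≤ f x}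

/-- The `r`-dilate `rΔ_{d,i}`. -/
def rdil (d r i : ℕ) : Set (Fin (d + 1) → ℝ) :=
  {x | ∑ t, x t = (i : ℝ) * r ∧ ∀ t, 0 ≤ x t ∧ x t ≤ r}

/-- The set `𝒞(s, n, m)` of lattice weak compositions of `m` into `n` parts each `≤ s`. -/
def Comp (s n : ℕ) (m : ℤ) : Set (Fin n → ℤ) :=
  {v | (∀ t, 0 ≤ v t ∧ v t ≤ s) ∧ ∑ t, v t = m}

lemma memLat {d j : ℕ} {v : Fin (d+1) → ℤ} {x : Fin (d+1) → ℝ} :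
    x ∈ latTranslate d v j ↔
      (∑ t, (x t - (v t : ℝ)) = (j : ℝ) ∧ ∀ t, 0 ≤ x t - (v t : ℝ) ∧ x t - (v t : ℝ) ≤ 1) :=
  Iff.rfl

def linF {n : ℕ} (c : Fin n → ℝ) : (Fin n → ℝ) →ₗ[ℝ] ℝ where
  toFun x := ∑ t, c t * x t
  map_add' x y := by simp [mul_add, Finset.sum_add_distrib]
  map_smul' r x := by simp [Finset.mul_sum, smul_eq_mul, mul_left_comm]

lemma linF_apply {n : ℕ} (c x : Fin n → ℝ) : linF c x = ∑ t, c t * x t := rfl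

lemma face_half (d : ℕ) (j1 j2 : ℕ) (u v : Fin (d+1) → ℤ)
    (hsum : (∑ t, u t) + (j1 : ℤ) = (∑ t, v t) + (j2 : ℤ)) :
    IsFace (latTranslate d u j1) (latTranslate d u j1 ∩ latTranslate d v j2) := by
  by_cases hE : latTranslate d u j1 ∩ latTranslate d v j2 = ∅
  · exact Or.inl hE
  obtain ⟨x0, hx0u, hx0v⟩ := Set.nonempty_iff_ne_empty.mpr hE
  obtain ⟨hsu, hbu⟩ := memLat.mp hx0u
  obtain ⟨hsv, hbv⟩ := memLat.mp hx0v
  have hcase : ∀ t, ((v t : ℝ) = (u t : ℝ) + 1) ∨ ((u t : ℝ) = (v t : ℝ) + 1)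
      ∨ ((u t : ℝ) = (v t : ℝ)) := by
    intro t
    have h1 := (hbu t).1; have h2 := (hbu t).2
    have h3 := (hbv t).1; have h4 := (hbv t).2
    have hA : u t ≤ v t + 1 := by
      have : (u t : ℝ) ≤ (v t : ℝ) + 1 := by linarith
      exact_mod_cast this
    have hB : v t ≤ u t + 1 := by
      have : (v t : ℝ) ≤ (u t : ℝ) + 1 := by linarith
      exact_mod_cast this
    have : v t = u t + 1 ∨ u t = v t + 1 ∨ u t = v t := by omega
    rcases this with h | h | h
    · left; exact_mod_cast congrArg (fun z : ℤ => (z : ℝ)) h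
    · right; left; exact_mod_cast congrArg (fun z : ℤ => (z : ℝ)) h
    · right; right; exact_mod_cast congrArg (fun z : ℤ => (z : ℝ)) h
  set c : Fin (d+1) → ℝ := fun t => (v t : ℝ) - (u t : ℝ) with hc
  have key : ∀ y ∈ latTranslate d u j1, ∀ t, c t * y t ≤ c t * x0 t := by
    intro y hy t
    obtain ⟨hsy, hby⟩ := memLat.mp hy
    have hy1 := (hby t).1; have hy2 := (hby t).2
    have h1 := (hbu t).1; have h2 := (hbu t).2
    have h3 := (hbv t).1; have h4 := (hbv t).2
    rcases hcase t with h | h | h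
    · have hct : c t = 1 := by simp only [hc]; linarith
      rw [hct]; nlinarith
    · have hct : c t = -1 := by simp only [hc]; linarith
      rw [hct]; nlinarith
    · have hct : c t = 0 := by simp only [hc]; linarith
      rw [hct]; simp
  right
  refine ⟨linF c, ?_⟩
  ext x
  simp only [Set.mem_setOf_eq, Set.mem_inter_iff]
  constructor
  · rintro ⟨hxu, hxv⟩
    refine ⟨hxu, fun y hy => ?_⟩
    obtain ⟨hsx, hbx⟩ := memLat.mp hxu
    obtain ⟨hsx', hbx'⟩ := memLat.mp hxv
    have h2 : ∀ t, c t * x t = c t * x0 t := by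
      intro t
      have a1 := (hbx t).1; have a2 := (hbx t).2
      have a3 := (hbx' t).1; have a4 := (hbx' t).2
      have b1 := (hbu t).1; have b2 := (hbu t).2
      have b3 := (hbv t).1; have b4 := (hbv t).2
      rcases hcase t with h | h | h
      · have hct : c t = 1 := by simp only [hc]; linarith
        rw [hct]; nlinarith
      · have hct : c t = -1 := by simp only [hc]; linarith
        rw [hct]; nlinarith
      · have hct : c t = 0 := by simp only [hc]; linarith
        rw [hct]; simp
    rw [linF_apply, linF_apply]
    calc ∑ t, c t * y t ≤ ∑ t, c t * x0 t := Finset.sum_le_sum (fun t _ => key y hy t)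
      _ = ∑ t, c t * x t := Finset.sum_congr rfl (fun t _ => (h2 t).symm)
  · rintro ⟨hxu, hmax⟩
    refine ⟨hxu, ?_⟩
    obtain ⟨hsx, hbx⟩ := memLat.mp hxu
    have hge : ∑ t, c t * x0 t ≤ ∑ t, c t * x t := by
      have := hmax x0 hx0u
      rwa [linF_apply, linF_apply] at this
    have hle : ∀ t ∈ Finset.univ, c t * x t ≤ c t * x0 t :=
      fun t _ => key x hxu t
    have heq : ∀ t ∈ (Finset.univ : Finset (Fin (d+1))), c t * x t = c t * x0 t :=
      (Finset.sum_eq_sum_iff_of_le hle).mp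
        (le_antisymm (Finset.sum_le_sum hle) hge)
    rw [memLat]
    constructor
    · have e1 : ∑ t, (x t - (u t : ℝ)) = ∑ t, x t - ∑ t, (u t : ℝ) :=
        Finset.sum_sub_distrib _ _
      have e2 : ∑ t, (x t - (v t : ℝ)) = ∑ t, x t - ∑ t, (v t : ℝ) :=
        Finset.sum_sub_distrib _ _
      have e3 : (∑ t, (u t : ℝ)) + (j1 : ℝ) = (∑ t, (v t : ℝ)) + (j2 : ℝ) := by
        have h := congrArg (fun z : ℤ => (z : ℝ)) hsum
        push_cast at h
        exact h
      rw [e2]; rw [e1] at hsx; linarith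
    · intro t
      have a1 := (hbx t).1; have a2 := (hbx t).2
      have b1 := (hbu t).1; have b2 := (hbu t).2
      have b3 := (hbv t).1; have b4 := (hbv t).2
      have he := heq t (Finset.mem_univ t)
      rcases hcase t with h | h | h
      · have hct : c t = 1 := by simp only [hc]; linarith
        rw [hct] at he
        constructor <;> nlinarith
      · have hct : c t = -1 := by simp only [hc]; linarith
        rw [hct] at he
        constructor <;> nlinarith
      · constructor <;> linarith
theorem stmt9 (d : ℕ) (hd : 1 ≤ d) (i : ℤ) :
    ({x : Fin (d + 1) → ℝ | ∑ t, x t = i} =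
      ⋃ j ∈ Finset.Icc 1 d, ⋃ v ∈ {v : Fin (d + 1) → ℤ | ∑ t, v t = i - j},
        latTranslate d v j) ∧
    (∀ (j1 j2 : ℕ) (u v : Fin (d + 1) → ℤ), 1 ≤ j1 → j1 ≤ d → 1 ≤ j2 → j2 ≤ d →
      (∑ t, u t) = i - j1 → (∑ t, v t) = i - j2 → (u, j1) ≠ (v, j2) →
      IsFace (latTranslate d u j1) (latTranslate d u j1 ∩ latTranslate d v j2) ∧
      IsFace (latTranslate d v j2) (latTranslate d u j1 ∩ latTranslate d v j2)) := by
  constructor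
  · ext x
    simp only [Set.mem_setOf_eq, Set.mem_iUnion, Finset.mem_Icc]
    constructor
    · intro hx
      by_cases h0 : ∀ t, x t = (⌊x t⌋ : ℝ)
      · -- x is an integer point; use j = 1
        have hif : ∑ t, (if t = (0 : Fin (d+1)) then (1:ℝ) else 0) = 1 := by simp
        have hifz : ∑ t, (if t = (0 : Fin (d+1)) then (1:ℤ) else 0) = 1 := by simp
        refine ⟨1, ⟨le_refl 1, hd⟩, fun t => ⌊x t⌋ - (if t = 0 then 1 else 0), ?_, ?_, ?_⟩
        · show ∑ t, (⌊x t⌋ - (if t = 0 then 1 else 0)) = i - (1:ℕ)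
          have hfl : ∑ t, ⌊x t⌋ = i := by
            have : ((∑ t, ⌊x t⌋ : ℤ) : ℝ) = ((i : ℤ) : ℝ) := by
              push_cast
              rw [← hx]
              exact Finset.sum_congr rfl (fun t _ => (h0 t).symm)
            exact_mod_cast this
          rw [Finset.sum_sub_distrib, hfl, hifz]
          norm_num
        · show ∑ t, (x t - ((⌊x t⌋ - (if t = 0 then 1 else 0) : ℤ) : ℝ)) = ((1:ℕ) : ℝ)
          have hth : ∀ t : Fin (d+1), x t - ((⌊x t⌋ - (if t = 0 then 1 else 0) : ℤ) : ℝ)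
              = (if t = (0 : Fin (d+1)) then (1:ℝ) else 0) := by
            intro t
            by_cases ht : t = 0
            · rw [if_pos ht, if_pos ht]; push_cast; linarith [h0 t]
            · rw [if_neg ht, if_neg ht]; push_cast; linarith [h0 t]
          rw [Finset.sum_congr rfl (fun t _ => hth t), hif]
          norm_num
        · intro t
          have hth : x t - ((⌊x t⌋ - (if t = 0 then 1 else 0) : ℤ) : ℝ)
              = (if t = (0 : Fin (d+1)) then (1:ℝ) else 0) := by
            by_cases ht : t = 0
            · rw [if_pos ht, if_pos ht]; push_cast; linarith [h0 t]
            · rw [if_neg ht, if_neg ht]; push_cast; linarith [h0 t]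
          constructor
          · show (0:ℝ) ≤ x t - ((⌊x t⌋ - (if t = 0 then 1 else 0) : ℤ) : ℝ)
            rw [hth]; split <;> norm_num
          · show x t - ((⌊x t⌋ - (if t = 0 then 1 else 0) : ℤ) : ℝ) ≤ 1
            rw [hth]; split <;> norm_num
      · -- generic point: j = (i - ∑ ⌊x t⌋).toNat
        push_neg at h0
        set j' : ℤ := i - ∑ t, ⌊x t⌋ with hj'
        have hs : ∑ t, (x t - (⌊x t⌋ : ℝ)) = (j' : ℝ) := by
          rw [Finset.sum_sub_distrib, hx, hj']
          push_cast
          ring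
        have hnn : ∀ t, 0 ≤ x t - (⌊x t⌋ : ℝ) := fun t => by
          have := Int.floor_le (x t); linarith
        have hlt : ∀ t, x t - (⌊x t⌋ : ℝ) < 1 := fun t => by
          have := Int.lt_floor_add_one (x t); linarith
        have hj'pos : 1 ≤ j' := by
          have h0' : (0:ℝ) ≤ (j' : ℝ) := by
            rw [← hs]; exact Finset.sum_nonneg (fun t _ => hnn t)
          have h0'' : 0 ≤ j' := by exact_mod_cast h0'
          rcases h0''.lt_or_eq with h | h
          · omega
          · exfalso
            have hz : ∑ t, (x t - (⌊x t⌋ : ℝ)) = 0 := by rw [hs, ← h]; simp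
            have := (Finset.sum_eq_zero_iff_of_nonneg (fun t _ => hnn t)).mp hz
            obtain ⟨t, ht⟩ := h0
            have := this t (Finset.mem_univ t)
            apply ht
            linarith
        have hj'le : j' ≤ d := by
          have hub : (j' : ℝ) < d + 1 := by
            rw [← hs]
            calc ∑ t, (x t - (⌊x t⌋ : ℝ)) < ∑ _t : Fin (d+1), (1:ℝ) :=
                  Finset.sum_lt_sum_of_nonempty ⟨0, Finset.mem_univ 0⟩
                    (fun t _ => hlt t)
              _ = d + 1 := by simp
          have : j' < (d : ℤ) + 1 := by exact_mod_cast hub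
          omega
        refine ⟨j'.toNat, ⟨by omega, by omega⟩, fun t => ⌊x t⌋, ?_, ?_, ?_⟩
        · show ∑ t, ⌊x t⌋ = i - (j'.toNat : ℕ)
          have : ((j'.toNat : ℕ) : ℤ) = j' := Int.toNat_of_nonneg (by omega)
          omega
        · show ∑ t, (x t - (⌊x t⌋ : ℝ)) = ((j'.toNat : ℕ) : ℝ)
          rw [hs]
          have : ((j'.toNat : ℕ) : ℤ) = j' := Int.toNat_of_nonneg (by omega)
          exact_mod_cast congrArg (fun z : ℤ => (z : ℝ)) this.symm
        · exact fun t => ⟨hnn t, le_of_lt (hlt t)⟩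
    · rintro ⟨j, ⟨hj1, hj2⟩, v, hv, hxl⟩
      obtain ⟨hsx, _⟩ := memLat.mp hxl
      have hv' : ∑ t, v t = i - (j : ℤ) := hv
      have e1 : ∑ t, (x t - (v t : ℝ)) = ∑ t, x t - ∑ t, (v t : ℝ) :=
        Finset.sum_sub_distrib _ _
      have e2 : (∑ t, (v t : ℝ)) = ((∑ t, v t : ℤ) : ℝ) := by push_cast; ring
      have e3 : ((∑ t, v t : ℤ) : ℝ) = (i : ℝ) - (j : ℝ) := by
        rw [hv']; push_cast; ring
      rw [e1, e2, e3] at hsx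
      linarith
  · intro j1 j2 u v _ _ _ _ hu hv _
    have hsum : (∑ t, u t) + (j1 : ℤ) = (∑ t, v t) + (j2 : ℤ) := by
      rw [hu, hv]; ring
    refine ⟨face_half d j1 j2 u v hsum, ?_⟩
    rw [Set.inter_comm]
    exact face_half d j2 j1 v u hsum.symm
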